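/- Let R be a domain with enough nonunits. Then for every nonconstant univariate polynomial f ∈ R[x] and every nonzero a ∈ R, there exist a maximal ideal m ⊆ R and an element r ∈ R such that f(r) ∈ m but a ∉ m. -/
import Mathlib

open Polynomial Finset

/-- Let `R` be a domain with enough nonunits (for every nonconstant `f ∈ R[x]` there is
`r ∈ R` with `f(r)` not a unit). Then for every nonconstant univariate `f ∈ R[x]` and
every nonzero `a ∈ R` there exist a maximal ideal `m ⊆ R` and `r ∈ R` with `f(r) ∈ m`
but `a ∉ m`. -/
theorem stmt_4 {R : Type*} [CommRing R] [IsDomain R]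
    (henough : ∀ f : Polynomial R, 0 < f.natDegree → ∃ r : R, ¬ IsUnit (f.eval r))
    (f : Polynomial R) (hf : 0 < f.natDegree) (a : R) (ha : a ≠ 0) :
    ∃ m : Ideal R, m.IsMaximal ∧ ∃ r : R, f.eval r ∈ m ∧ a ∉ m := by
  set n := f.natDegree with hn
  set c : R := f.coeff 0 with hc
  by_cases hc0 : c = 0
  · -- f(0) = 0 ∈ m; find m avoiding a using the polynomial a*X + 1
    have hdeg : 0 < (C a * X + 1 : Polynomial R).natDegree := by
      have : (C a * X + 1 : Polynomial R).natDegree = 1 := by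
        compute_degree!
      omega
    obtain ⟨r, hr⟩ := henough _ hdeg
    obtain ⟨m, hm, hmem⟩ := exists_max_ideal_of_mem_nonunits hr
    refine ⟨m, hm, 0, ?_, ?_⟩
    · have : f.eval 0 = c := by simp [hc, eval_zero, coeff_zero_eq_eval_zero]
      rw [this, hc0]; exact m.zero_mem
    · intro ham
      have h1 : (1 : R) ∈ m := by
        have := m.sub_mem hmem (m.mul_mem_right r ham)
        simpa using this
      exact hm.ne_top (m.eq_top_iff_one.mpr h1)
  · -- main case
    set q : Polynomial R := ∑ i ∈ range n, monomial i (f.coeff (i+1) * (a*c)^i) with hq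
    have hqcoeff : ∀ j, q.coeff j = if j < n then f.coeff (j+1) * (a*c)^j else 0 := by
      intro j
      rw [hq, finset_sum_coeff]
      simp only [coeff_monomial]
      by_cases hj : j < n
      · rw [Finset.sum_eq_single j]
        · simp [hj]
        · intro b _ hbj; simp [hbj]
        · intro hjn; exact absurd (Finset.mem_range.mpr hj) hjn
      · rw [if_neg hj]
        apply Finset.sum_eq_zero
        intro b hb
        have : b ≠ j := by
          intro h; exact hj (h ▸ Finset.mem_range.mp hb)
        simp [this]
    set h : Polynomial R := 1 + C a * X * q with hhdef
    have hf0 : f ≠ 0 := fun h0 => by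
      rw [hn, h0, natDegree_zero] at hf; exact lt_irrefl 0 hf
    have hfn : f.coeff n ≠ 0 := by
      have := Polynomial.leadingCoeff_ne_zero.mpr hf0
      rwa [Polynomial.leadingCoeff, ← hn] at this
    have hhcoeffn : h.coeff n = a * (f.coeff n * (a*c)^(n-1)) := by
      have h1 : (1 : Polynomial R).coeff n = 0 := by
        rw [coeff_one, if_neg (by omega)]
      rw [hhdef, coeff_add, h1, zero_add, mul_assoc, coeff_C_mul,
        show n = (n-1)+1 by omega, coeff_X_mul, hqcoeff (n-1), if_pos (by omega)]
      simp
    have hhn0 : h.coeff n ≠ 0 := by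
      rw [hhcoeffn]
      apply mul_ne_zero ha (mul_ne_zero hfn (pow_ne_zero _ (mul_ne_zero ha hc0)))
    have hhdeg : 0 < h.natDegree := lt_of_lt_of_le hf (le_natDegree_of_ne_zero hhn0)
    obtain ⟨r, hr⟩ := henough h hhdeg
    obtain ⟨m, hm, hmem⟩ := exists_max_ideal_of_mem_nonunits hr
    -- key evaluation identity
    have hqeval : q.eval r = ∑ i ∈ range n, f.coeff (i+1) * (a*c)^i * r^i := by
      rw [hq, eval_finset_sum]
      exact Finset.sum_congr rfl (fun i _ => by rw [eval_monomial])
    have hkey : f.eval (a*c*r) = c * h.eval r := by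
      rw [eval_eq_sum_range, hn.symm, Finset.sum_range_succ']
      rw [hhdef]
      simp only [eval_add, eval_one, eval_mul, eval_C, eval_X, hqeval]
      rw [Finset.mul_sum, mul_add, mul_one, Finset.mul_sum, pow_zero, mul_one, ← hc,
        add_comm c _]
      congr 1
      refine Finset.sum_congr rfl (fun i _ => ?_)
      ring
    refine ⟨m, hm, a*c*r, ?_, ?_⟩
    · rw [hkey]; exact m.mul_mem_left c hmem
    · intro ham
      have h1 : (1 : R) ∈ m := by
        have heq : h.eval r = 1 + a * (r * q.eval r) := by
          rw [hhdef]; simp; ring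
        have := m.sub_mem hmem (m.mul_mem_right (r * q.eval r) ham)
        rw [heq] at this
        simpa using this
      exact hm.ne_top (m.eq_top_iff_one.mpr h1)
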